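/- For all positive integers n, the determinant of the n×n Hankel matrix whose (i,j) entry is the Motzkin number M_{i+j} equals 1. -/

import Mathlib

/- The Motzkin number `M n`: the number of lattice paths from `(0,0)` to `(n,0)` with
steps `(1,1)`, `(1,0)`, `(1,-1)` that never go below the x-axis. A path of length `n` is
encoded as a function `f : Fin n → Fin 3`, step `i` having height change `1 - (f i)`. -/
open scoped Classical in
noncomputable def motzkin (n : ℕ) : ℕ :=
  (Finset.univ.filter (fun f : Fin n → Fin 3 =>
    (∑ i, (1 - ((f i : ℕ) : ℤ))) = 0 ∧
    ∀ m : ℕ, m ≤ n →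
      0 ≤ ∑ i ∈ Finset.univ.filter (fun i : Fin n => (i : ℕ) < m),
        (1 - ((f i : ℕ) : ℤ)))).card

open Finset

open scoped Classical in
noncomputable def pathCount (n : ℕ) (e : ℤ) : ℕ :=
  (Finset.univ.filter (fun f : Fin n → Fin 3 =>
    (∑ i, (1 - ((f i : ℕ) : ℤ))) = e ∧
    ∀ m : ℕ, m ≤ n →
      0 ≤ ∑ i ∈ Finset.univ.filter (fun i : Fin n => (i : ℕ) < m),
        (1 - ((f i : ℕ) : ℤ)))).card

noncomputable def preSum {n : ℕ} (f : Fin n → Fin 3) (m : ℕ) : ℤ :=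
  ∑ i ∈ Finset.univ.filter (fun i : Fin n => (i : ℕ) < m), (1 - ((f i : ℕ) : ℤ))

open scoped Classical in
lemma pathCount_def (n : ℕ) (e : ℤ) :
    pathCount n e = (Finset.univ.filter (fun f : Fin n → Fin 3 =>
      (∑ i, (1 - ((f i : ℕ) : ℤ))) = e ∧ ∀ m : ℕ, m ≤ n → 0 ≤ preSum f m)).card := rfl

lemma preSum_snoc {n : ℕ} (f : Fin n → Fin 3) (a : Fin 3) {m : ℕ} (hm : m ≤ n) :
    preSum (Fin.snoc f a) m = preSum f m := by
  classical
  unfold preSum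
  rw [Finset.sum_filter, Finset.sum_filter, Fin.sum_univ_castSucc]
  have h : ¬ (n < m) := by omega
  simp [Fin.snoc_castSucc, Fin.val_last, h]

lemma sum_snoc {n : ℕ} (f : Fin n → Fin 3) (a : Fin 3) :
    (∑ i : Fin (n+1), (1 - (((Fin.snoc f a : Fin (n+1) → Fin 3) i : ℕ) : ℤ)))
      = (∑ i, (1 - ((f i : ℕ) : ℤ))) + (1 - ((a : ℕ) : ℤ)) := by
  rw [Fin.sum_univ_castSucc]
  simp [Fin.snoc_castSucc]

lemma preSum_all {n : ℕ} (f : Fin n → Fin 3) {m : ℕ} (hm : n ≤ m) :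
    preSum f m = ∑ i, (1 - ((f i : ℕ) : ℤ)) := by
  classical
  unfold preSum
  congr 1
  apply Finset.filter_true_of_mem
  intro i _
  exact lt_of_lt_of_le i.isLt hm

lemma pathCount_neg {n : ℕ} {e : ℤ} (he : e < 0) : pathCount n e = 0 := by
  classical
  rw [pathCount_def, Finset.card_eq_zero, Finset.filter_eq_empty_iff]
  rintro f - ⟨h1, h2⟩
  have := h2 n le_rfl
  rw [preSum_all f le_rfl, h1] at this
  omega

lemma pathCount_gt {n : ℕ} {e : ℤ} (he : (n : ℤ) < e) : pathCount n e = 0 := by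
  classical
  rw [pathCount_def, Finset.card_eq_zero, Finset.filter_eq_empty_iff]
  rintro f - ⟨h1, h2⟩
  have : (∑ i, (1 - ((f i : ℕ) : ℤ))) ≤ ∑ _i : Fin n, (1 : ℤ) := by
    apply Finset.sum_le_sum
    intro i _
    have : (0 : ℤ) ≤ ((f i : ℕ) : ℤ) := Int.natCast_nonneg _
    omega
  rw [Finset.sum_const, Finset.card_univ, Fintype.card_fin, nsmul_eq_mul, mul_one, h1] at this
  omega

lemma pathCount_self (n : ℕ) : pathCount n (n : ℤ) = 1 := by
  classical
  rw [pathCount_def]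
  have : (Finset.univ.filter (fun f : Fin n → Fin 3 =>
      (∑ i, (1 - ((f i : ℕ) : ℤ))) = (n : ℤ) ∧ ∀ m : ℕ, m ≤ n → 0 ≤ preSum f m))
      = {fun _ => (0 : Fin 3)} := by
    ext f
    simp only [Finset.mem_filter, Finset.mem_univ, true_and, Finset.mem_singleton]
    constructor
    · rintro ⟨h1, -⟩
      have hsum : (∑ i, ((f i : ℕ) : ℤ)) = 0 := by
        have h2 : ∑ i : Fin n, (1 - ((f i : ℕ) : ℤ)) = (n : ℤ) - ∑ i, ((f i : ℕ) : ℤ) := by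
          rw [Finset.sum_sub_distrib, Finset.sum_const, Finset.card_univ, Fintype.card_fin,
            nsmul_eq_mul, mul_one]
        rw [h2] at h1
        omega
      have hall := (Finset.sum_eq_zero_iff_of_nonneg (by intro i _; positivity)).mp hsum
      funext i
      have := hall i (Finset.mem_univ i)
      have : (f i : ℕ) = 0 := by exact_mod_cast this
      exact Fin.ext this
    · rintro rfl
      refine ⟨by simp, fun m hm => ?_⟩
      unfold preSum
      apply Finset.sum_nonneg
      intro i _
      simp
  rw [this, Finset.card_singleton]


def snocEquiv (n : ℕ) : ((Fin n → Fin 3) × Fin 3) ≃ (Fin (n+1) → Fin 3) where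
  toFun p := Fin.snoc p.1 p.2
  invFun f := (Fin.init f, f (Fin.last n))
  left_inv p := by simp [Fin.init_snoc, Fin.snoc_last]
  right_inv f := by simp [Fin.snoc_init_self]

lemma pathCount_succ (n : ℕ) (e : ℤ) (he : 0 ≤ e) :
    pathCount (n+1) e = pathCount n (e-1) + pathCount n e + pathCount n (e+1) := by
  classical
  have key : ∀ a : Fin 3, ∀ g : Fin n → Fin 3,
      ((∑ i : Fin (n+1), (1 - (((Fin.snoc g a : Fin (n+1) → Fin 3) i : ℕ) : ℤ))) = e ∧
        ∀ m : ℕ, m ≤ n + 1 → 0 ≤ preSum (Fin.snoc g a) m)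
      ↔ ((∑ i, (1 - ((g i : ℕ) : ℤ))) = e - (1 - ((a : ℕ) : ℤ)) ∧
        ∀ m : ℕ, m ≤ n → 0 ≤ preSum g m) := by
    intro a g
    constructor
    · rintro ⟨h1, h2⟩
      rw [sum_snoc] at h1
      refine ⟨by omega, fun m hm => ?_⟩
      have := h2 m (by omega)
      rwa [preSum_snoc g a hm] at this
    · rintro ⟨h1, h2⟩
      rw [sum_snoc, h1]
      refine ⟨by ring, fun m hm => ?_⟩
      rcases Nat.lt_or_ge m (n+1) with h | h
      · rw [preSum_snoc g a (by omega)]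
        exact h2 m (by omega)
      · have hm' : m = n + 1 := by omega
        subst hm'
        rw [preSum_all _ le_rfl, sum_snoc, h1]
        have : e - (1 - ((a : ℕ) : ℤ)) + (1 - ((a : ℕ) : ℤ)) = e := by ring
        rw [this]
        exact he
  rw [pathCount_def, Finset.card_filter]
  rw [← Equiv.sum_comp (snocEquiv n)]
  rw [Fintype.sum_prod_type]
  have step : ∀ g : Fin n → Fin 3, ∀ a : Fin 3,
      (if (∑ i : Fin (n+1), (1 - (((snocEquiv n) (g, a) i : ℕ) : ℤ)) = e ∧
          ∀ m : ℕ, m ≤ n + 1 → 0 ≤ preSum ((snocEquiv n) (g, a)) m) then 1 else 0)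
      = (if ((∑ i, (1 - ((g i : ℕ) : ℤ))) = e - (1 - ((a : ℕ) : ℤ)) ∧
          ∀ m : ℕ, m ≤ n → 0 ≤ preSum g m) then 1 else 0) := by
    intro g a
    have := key a g
    simp only [snocEquiv, Equiv.coe_fn_mk]
    exact if_congr this rfl rfl
  calc ∑ g : Fin n → Fin 3, ∑ a : Fin 3,
        (if (∑ i : Fin (n+1), (1 - (((snocEquiv n) (g, a) i : ℕ) : ℤ)) = e ∧
          ∀ m : ℕ, m ≤ n + 1 → 0 ≤ preSum ((snocEquiv n) (g, a)) m) then 1 else 0)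
      = ∑ g : Fin n → Fin 3, ∑ a : Fin 3,
        (if ((∑ i, (1 - ((g i : ℕ) : ℤ))) = e - (1 - ((a : ℕ) : ℤ)) ∧
          ∀ m : ℕ, m ≤ n → 0 ≤ preSum g m) then 1 else 0) := by
        exact Finset.sum_congr rfl (fun g _ => Finset.sum_congr rfl (fun a _ => step g a))
    _ = ∑ a : Fin 3, ∑ g : Fin n → Fin 3,
        (if ((∑ i, (1 - ((g i : ℕ) : ℤ))) = e - (1 - ((a : ℕ) : ℤ)) ∧
          ∀ m : ℕ, m ≤ n → 0 ≤ preSum g m) then 1 else 0) := Finset.sum_comm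
    _ = pathCount n (e-1) + pathCount n e + pathCount n (e+1) := by
        rw [Fin.sum_univ_three]
        rw [pathCount_def, pathCount_def, pathCount_def,
          Finset.card_filter, Finset.card_filter, Finset.card_filter]
        norm_num

noncomputable def mz (i k : ℕ) : ℕ := pathCount i (k : ℤ)

lemma mz_diag (i : ℕ) : mz i i = 1 := pathCount_self i

lemma mz_zero_of_lt {i k : ℕ} (h : i < k) : mz i k = 0 :=
  pathCount_gt (by exact_mod_cast h)

lemma mz_succ (i k : ℕ) :
    mz (i+1) k = (if k = 0 then 0 else mz i (k-1)) + mz i k + mz i (k+1) := by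
  have h := pathCount_succ i (k : ℤ) (by positivity)
  rcases k with _ | k
  · simpa [mz, pathCount_neg (show (-1:ℤ) < 0 by norm_num)] using h
  · have h1 : ((k+1 : ℕ) : ℤ) - 1 = (k : ℤ) := by push_cast; ring
    have h2 : ((k+1 : ℕ) : ℤ) + 1 = ((k+2 : ℕ) : ℤ) := by push_cast; ring
    rw [h1, h2] at h
    simpa [mz, add_assoc] using h

lemma shift_sum (u v : ℕ → ℕ) (M : ℕ) (h : u M = 0) :
    ∑ k ∈ Finset.range (M+1), (if k = 0 then 0 else u (k-1)) * v k
      = ∑ k ∈ Finset.range (M+1), u k * v (k+1) := by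
  rw [Finset.sum_range_succ' (fun k => (if k = 0 then 0 else u (k-1)) * v k) M]
  rw [Finset.sum_range_succ (fun k => u k * v (k+1)) M]
  simp [h]

lemma key_sum (i : ℕ) : ∀ j M : ℕ, i + j ≤ M →
    ∑ k ∈ Finset.range (M+1), mz i k * mz j k = mz (i + j) 0 := by
  induction i with
  | zero =>
    intro j M h
    rw [Finset.sum_eq_single 0]
    · simp [mz_diag]
    · intro k _ hk
      rw [mz_zero_of_lt (by omega)]
      ring
    · simp
  | succ i ih =>
    intro j M h
    have hiM : mz i M = 0 := mz_zero_of_lt (by omega)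
    have hjM : mz j M = 0 := mz_zero_of_lt (by omega)
    have lhs : ∑ k ∈ Finset.range (M+1), mz (i+1) k * mz j k
        = ∑ k ∈ Finset.range (M+1), mz i k * mz (j+1) k := by
      calc ∑ k ∈ Finset.range (M+1), mz (i+1) k * mz j k
          = ∑ k ∈ Finset.range (M+1),
            ((if k = 0 then 0 else mz i (k-1)) * mz j k + mz i k * mz j k
              + mz i (k+1) * mz j k) := by
            apply Finset.sum_congr rfl
            intro k _
            rw [mz_succ]
            ring
        _ = (∑ k ∈ Finset.range (M+1), (if k = 0 then 0 else mz i (k-1)) * mz j k)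
            + (∑ k ∈ Finset.range (M+1), mz i k * mz j k)
            + (∑ k ∈ Finset.range (M+1), mz i (k+1) * mz j k) := by
            rw [← Finset.sum_add_distrib, ← Finset.sum_add_distrib]
        _ = (∑ k ∈ Finset.range (M+1), mz i k * mz j (k+1))
            + (∑ k ∈ Finset.range (M+1), mz i k * mz j k)
            + (∑ k ∈ Finset.range (M+1), mz i k * (if k = 0 then 0 else mz j (k-1))) := by
            rw [shift_sum (mz i) (mz j) M hiM]
            congr 1
            have := shift_sum (mz j) (mz i) M hjM
            calc ∑ k ∈ Finset.range (M+1), mz i (k+1) * mz j k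
                = ∑ k ∈ Finset.range (M+1), mz j k * mz i (k+1) := by
                  apply Finset.sum_congr rfl; intros; ring
              _ = ∑ k ∈ Finset.range (M+1), (if k = 0 then 0 else mz j (k-1)) * mz i k := this.symm
              _ = ∑ k ∈ Finset.range (M+1), mz i k * (if k = 0 then 0 else mz j (k-1)) := by
                  apply Finset.sum_congr rfl; intros; ring
        _ = ∑ k ∈ Finset.range (M+1), mz i k * mz (j+1) k := by
            rw [← Finset.sum_add_distrib, ← Finset.sum_add_distrib]
            apply Finset.sum_congr rfl
            intro k _
            rw [mz_succ j k]
            ring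
    rw [lhs, ih (j+1) M (by omega)]
    congr 1
    omega

lemma motzkin_eq_mz (n : ℕ) : motzkin n = mz n 0 := rfl

theorem motzkin_hankel_det (n : ℕ) (hn : 0 < n) :
    (Matrix.of fun i j : Fin n => (motzkin (i.1 + j.1) : ℤ)).det = 1 := by
  classical
  set B : Matrix (Fin n) (Fin n) ℤ := Matrix.of fun i k : Fin n => (mz i.1 k.1 : ℤ) with hB
  have hfact : (Matrix.of fun i j : Fin n => (motzkin (i.1 + j.1) : ℤ)) = B * B.transpose := by
    ext i j
    simp only [Matrix.mul_apply, Matrix.transpose_apply, Matrix.of_apply, hB]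
    have hnat : motzkin (i.1 + j.1) = ∑ k ∈ Finset.range n, mz i.1 k * mz j.1 k := by
      rw [motzkin_eq_mz]
      rw [← key_sum i.1 j.1 (n + i.1 + j.1) (by omega)]
      symm
      apply Finset.sum_subset
      · intro k hk
        simp only [Finset.mem_range] at *
        omega
      · intro k _ hk
        simp only [Finset.mem_range, not_lt] at hk
        rw [mz_zero_of_lt (by omega : i.1 < k)]
        ring
    rw [hnat]
    push_cast
    rw [← Fin.sum_univ_eq_sum_range (fun k => (mz i.1 k : ℤ) * (mz j.1 k : ℤ)) n]
  have hBtri : B.BlockTriangular (OrderDual.toDual : Fin n → (Fin n)ᵒᵈ) := by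
    intro i j hij
    simp only [hB, Matrix.of_apply]
    have hij' : (i : ℕ) < (j : ℕ) := OrderDual.toDual_lt_toDual.mp hij
    rw [mz_zero_of_lt hij']
    norm_num
  have hBdet : B.det = 1 := by
    rw [Matrix.det_of_lowerTriangular B hBtri]
    apply Finset.prod_eq_one
    intro i _
    simp [hB, mz_diag]
  rw [hfact, Matrix.det_mul, Matrix.det_transpose, hBdet]
  norm_num
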